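/- Let φ be a smooth rapidly decreasing function on ℝ. Then for all real μ, μ', |(φ(μ-μ') - φ(μ))/μ' · (μ'+i)| ≤ C[(1+|μ|)^{-4} + (1+|μ-μ'|)^{-4}], where the left-hand side is interpreted via the divided difference when μ' = 0 and C depends only on finitely many Schwartz seminorms of φ. -/

import Mathlib

noncomputable section

set_option maxHeartbeats 1000000 in
theorem divided_difference_bound (φ : SchwartzMap ℝ ℂ) :
    ∃ C : ℝ, 0 < C ∧ ∀ μ μ' : ℝ,
      ‖(if μ' = 0 then -deriv (⇑φ) μ else (φ (μ - μ') - φ μ) / ((μ' : ℝ) : ℂ)) *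
          (((μ' : ℝ) : ℂ) + Complex.I)‖ ≤
        C * (((1 + |μ|) ^ 4)⁻¹ + ((1 + |μ - μ'|) ^ 4)⁻¹) := by
  obtain ⟨C₀, hC₀⟩ : ∃ C₀ : ℝ, ∀ x : ℝ, (1 + |x|) ^ 4 * ‖φ x‖ ≤ C₀ := by
    refine ⟨2 ^ 4 * (Finset.Iic ((4 : ℕ), (0 : ℕ))).sup
      (fun m => SchwartzMap.seminorm ℝ m.1 m.2) φ, fun x => ?_⟩
    have := SchwartzMap.one_add_le_sup_seminorm_apply (𝕜 := ℝ) (m := (4, 0))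
      le_rfl le_rfl φ x
    simpa [norm_iteratedFDeriv_zero, Real.norm_eq_abs] using this
  set ψ : SchwartzMap ℝ ℂ := SchwartzMap.derivCLM ℝ ℂ φ with hψ
  have hψeq : ∀ x : ℝ, ψ x = deriv (⇑φ) x := fun x => SchwartzMap.derivCLM_apply ℝ φ x
  obtain ⟨C₁, hC₁⟩ : ∃ C₁ : ℝ, ∀ x : ℝ, (1 + |x|) ^ 4 * ‖deriv (⇑φ) x‖ ≤ C₁ := by
    refine ⟨2 ^ 4 * (Finset.Iic ((4 : ℕ), (0 : ℕ))).sup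
      (fun m => SchwartzMap.seminorm ℝ m.1 m.2) ψ, fun x => ?_⟩
    have := SchwartzMap.one_add_le_sup_seminorm_apply (𝕜 := ℝ) (m := (4, 0))
      le_rfl le_rfl ψ x
    rw [← hψeq x]
    simpa [norm_iteratedFDeriv_zero, Real.norm_eq_abs] using this
  have hC₀0 : 0 ≤ C₀ := le_trans (by positivity) (hC₀ 0)
  have hC₁0 : 0 ≤ C₁ := le_trans (by positivity) (hC₁ 0)
  refine ⟨32 * (C₀ + C₁) + 1, by positivity, fun μ μ' => ?_⟩
  have hPμ : (0:ℝ) < (1 + |μ|) ^ 4 := by positivity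
  have hPμ' : (0:ℝ) < (1 + |μ - μ'|) ^ 4 := by positivity
  by_cases h0 : μ' = 0
  · subst h0
    rw [if_pos rfl]
    simp only [Complex.ofReal_zero, zero_add, norm_mul, norm_neg,
      Complex.norm_I, mul_one, sub_zero]
    have h1 : ‖deriv (⇑φ) μ‖ ≤ C₁ * ((1 + |μ|) ^ 4)⁻¹ := by
      rw [← div_eq_mul_inv, le_div_iff₀ hPμ]
      nlinarith [hC₁ μ]
    have h2 : (0:ℝ) ≤ ((1 + |μ|) ^ 4)⁻¹ := by positivity
    nlinarith
  · rw [if_neg h0]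
    have hμ'pos : (0:ℝ) < |μ'| := abs_pos.mpr h0
    have hnormI : ‖((μ' : ℝ) : ℂ) + Complex.I‖ ≤ 1 + |μ'| := by
      calc ‖((μ' : ℝ) : ℂ) + Complex.I‖ ≤ ‖((μ' : ℝ) : ℂ)‖ + ‖Complex.I‖ := norm_add_le _ _
        _ = |μ'| + 1 := by simp [Complex.norm_real]
        _ = 1 + |μ'| := by ring
    rw [norm_mul, norm_div, Complex.norm_real, Real.norm_eq_abs]
    by_cases hsmall : |μ'| ≤ 1
    · -- mean value theorem case
      have hdiff : ‖φ (μ - μ') - φ μ‖ ≤ (16 * C₁ * ((1 + |μ|) ^ 4)⁻¹) * ‖(μ - μ') - μ‖ := by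
        refine Convex.norm_image_sub_le_of_norm_deriv_le
          (fun ξ _ => φ.differentiableAt) (fun ξ hξ => ?_)
          (convex_closedBall μ 1) ?_ ?_
        · have hdist : |ξ - μ| ≤ 1 := by
            simpa [Metric.mem_closedBall, Real.dist_eq] using hξ
          have hba : 1 + |μ| ≤ 2 * (1 + |ξ|) := by
            have : |μ| ≤ |ξ| + 1 := by
              have := abs_sub_abs_le_abs_sub μ ξ
              have h2 : |μ - ξ| ≤ 1 := by rwa [abs_sub_comm]
              linarith
            linarith [abs_nonneg ξ]
          have hb4 : (1 + |μ|) ^ 4 ≤ 16 * (1 + |ξ|) ^ 4 := by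
            have := pow_le_pow_left₀ (by positivity) hba 4
            nlinarith [this]
          rw [← div_eq_mul_inv]
          rw [le_div_iff₀ hPμ]
          nlinarith [hC₁ ξ, norm_nonneg (deriv (⇑φ) ξ),
            mul_le_mul_of_nonneg_left hb4 (norm_nonneg (deriv (⇑φ) ξ))]
        · simp [Metric.mem_closedBall]
        · simp only [Metric.mem_closedBall, Real.dist_eq]
          rw [show μ - μ' - μ = -μ' from by ring, abs_neg]
          exact hsmall
      have hsub : ‖(μ - μ') - μ‖ = |μ'| := by
        rw [Real.norm_eq_abs]; rw [show μ - μ' - μ = -μ' by ring, abs_neg]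
      rw [hsub] at hdiff
      have hdd : ‖φ (μ - μ') - φ μ‖ / |μ'| ≤ 16 * C₁ * ((1 + |μ|) ^ 4)⁻¹ := by
        rw [div_le_iff₀ hμ'pos]
        nlinarith [hdiff]
      have hI2 : ‖((μ' : ℝ) : ℂ) + Complex.I‖ ≤ 2 := le_trans hnormI (by linarith)
      have hfin : ‖φ (μ - μ') - φ μ‖ / |μ'| * ‖((μ' : ℝ) : ℂ) + Complex.I‖ ≤
          32 * C₁ * ((1 + |μ|) ^ 4)⁻¹ := by
        calc ‖φ (μ - μ') - φ μ‖ / |μ'| * ‖((μ' : ℝ) : ℂ) + Complex.I‖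
            ≤ (16 * C₁ * ((1 + |μ|) ^ 4)⁻¹) * 2 :=
              mul_le_mul hdd hI2 (norm_nonneg _) (by positivity)
          _ = 32 * C₁ * ((1 + |μ|) ^ 4)⁻¹ := by ring
      have h2 : (0:ℝ) ≤ ((1 + |μ|) ^ 4)⁻¹ := by positivity
      have h3 : (0:ℝ) ≤ ((1 + |μ - μ'|) ^ 4)⁻¹ := by positivity
      have hstep : 32 * C₁ * ((1 + |μ|) ^ 4)⁻¹ ≤
          (32 * (C₀ + C₁) + 1) * ((1 + |μ|) ^ 4)⁻¹ :=
        mul_le_mul_of_nonneg_right (by linarith) h2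
      have hnn2 : (0:ℝ) ≤ (32 * (C₀ + C₁) + 1) * ((1 + |μ - μ'|) ^ 4)⁻¹ := by positivity
      linarith [hfin]
    · -- large μ' case
      push_neg at hsmall
      have hA : ‖φ (μ - μ')‖ ≤ C₀ * ((1 + |μ - μ'|) ^ 4)⁻¹ := by
        rw [← div_eq_mul_inv, le_div_iff₀ hPμ']
        nlinarith [hC₀ (μ - μ')]
      have hB : ‖φ μ‖ ≤ C₀ * ((1 + |μ|) ^ 4)⁻¹ := by
        rw [← div_eq_mul_inv, le_div_iff₀ hPμ]
        nlinarith [hC₀ μ]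
      have hdiff : ‖φ (μ - μ') - φ μ‖ ≤ C₀ * (((1 + |μ|) ^ 4)⁻¹ + ((1 + |μ - μ'|) ^ 4)⁻¹) := by
        calc ‖φ (μ - μ') - φ μ‖ ≤ ‖φ (μ - μ')‖ + ‖φ μ‖ := norm_sub_le _ _
          _ ≤ C₀ * (((1 + |μ|) ^ 4)⁻¹ + ((1 + |μ - μ'|) ^ 4)⁻¹) := by nlinarith
      have hratio : (1 + |μ'|) / |μ'| ≤ 2 := by
        rw [div_le_iff₀ hμ'pos]; linarith
      have hnn : (0:ℝ) ≤ ‖φ (μ - μ') - φ μ‖ := norm_nonneg _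
      have h2 : (0:ℝ) ≤ ((1 + |μ|) ^ 4)⁻¹ := by positivity
      have h3 : (0:ℝ) ≤ ((1 + |μ - μ'|) ^ 4)⁻¹ := by positivity
      have key : ‖φ (μ - μ') - φ μ‖ / |μ'| * ‖((μ' : ℝ) : ℂ) + Complex.I‖ ≤
          2 * ‖φ (μ - μ') - φ μ‖ := by
        have h4 : ‖φ (μ - μ') - φ μ‖ / |μ'| * ‖((μ' : ℝ) : ℂ) + Complex.I‖ ≤
            ‖φ (μ - μ') - φ μ‖ / |μ'| * (1 + |μ'|) := by
          exact mul_le_mul_of_nonneg_left hnormI (by positivity)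
        have h5 : ‖φ (μ - μ') - φ μ‖ / |μ'| * (1 + |μ'|) ≤ 2 * ‖φ (μ - μ') - φ μ‖ := by
          rw [div_mul_eq_mul_div, div_le_iff₀ hμ'pos]
          nlinarith
        linarith
      have hstep : 2 * ‖φ (μ - μ') - φ μ‖ ≤
          2 * C₀ * (((1 + |μ|) ^ 4)⁻¹ + ((1 + |μ - μ'|) ^ 4)⁻¹) := by linarith
      have hstep2 : 2 * C₀ * (((1 + |μ|) ^ 4)⁻¹ + ((1 + |μ - μ'|) ^ 4)⁻¹) ≤
          (32 * (C₀ + C₁) + 1) * (((1 + |μ|) ^ 4)⁻¹ + ((1 + |μ - μ'|) ^ 4)⁻¹) :=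
        mul_le_mul_of_nonneg_right (by linarith) (by positivity)
      linarith
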